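/- Consider the line L = {(t, 1+t) : t ∈ C \ {0,−1}} ⊂ (C*)^2. The restriction of the argument map Arg(z_1,z_2) = (arg z_1, arg z_2) to the set of points t with Im(t) > 0 is injective, and similarly for Im(t) < 0. -/

import Mathlib

lemma arg_key (t₁ t₂ : ℂ) (h1 : t₁.im ≠ 0) (h2 : t₂.im ≠ 0)
    (ha : Complex.arg t₁ = Complex.arg t₂)
    (hb : Complex.arg (1 + t₁) = Complex.arg (1 + t₂)) : t₁ = t₂ := by
  have p1 : (0:ℝ) < ‖t₁‖ := by
    simp only [norm_pos_iff]
    intro h; apply h1; simp [h]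
  have p2 : (0:ℝ) < ‖t₂‖ := by
    simp only [norm_pos_iff]
    intro h; apply h2; simp [h]
  have q1 : (0:ℝ) < ‖(1 + t₁)‖ := by
    simp only [norm_pos_iff]
    intro h; apply h1
    have := congrArg Complex.im h; simpa using this
  have q2 : (0:ℝ) < ‖(1 + t₂)‖ := by
    simp only [norm_pos_iff]
    intro h; apply h2
    have := congrArg Complex.im h; simpa using this
  have e1 : (↑(‖t₂‖) : ℂ) * t₁ = (↑(‖t₁‖) : ℂ) * t₂ := by
    conv_lhs => rw [← Complex.norm_mul_exp_arg_mul_I t₁]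
    conv_rhs => rw [← Complex.norm_mul_exp_arg_mul_I t₂]
    rw [ha]; ring
  have e2 : (↑(‖(1 + t₂)‖) : ℂ) * (1 + t₁)
      = (↑(‖(1 + t₁)‖) : ℂ) * (1 + t₂) := by
    conv_lhs => rw [← Complex.norm_mul_exp_arg_mul_I (1 + t₁)]
    conv_rhs => rw [← Complex.norm_mul_exp_arg_mul_I (1 + t₂)]
    rw [hb]; ring
  have e1re : ‖t₂‖ * t₁.re = ‖t₁‖ * t₂.re := by
    have := congrArg Complex.re e1; simpa using this
  have e1im : ‖t₂‖ * t₁.im = ‖t₁‖ * t₂.im := by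
    have := congrArg Complex.im e1; simpa using this
  have e2re : ‖(1 + t₂)‖ * (1 + t₁.re) = ‖(1 + t₁)‖ * (1 + t₂.re) := by
    have := congrArg Complex.re e2; simpa using this
  have e2im : ‖(1 + t₂)‖ * t₁.im = ‖(1 + t₁)‖ * t₂.im := by
    have := congrArg Complex.im e2; simpa using this
  -- |t₂|*|1+t₁| = |t₁|*|1+t₂|
  have h4 : ‖t₂‖ * ‖(1 + t₁)‖ = ‖t₁‖ * ‖(1 + t₂)‖ := by
    have h3 : (‖t₂‖ * ‖(1 + t₁)‖
        - ‖t₁‖ * ‖(1 + t₂)‖) * t₁.im = 0 := by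
      linear_combination ‖(1 + t₁)‖ * e1im - ‖t₁‖ * e2im
    rcases mul_eq_zero.mp h3 with h | h
    · linarith
    · exact absurd h h1
  have h6 : ‖t₂‖ * (1 + t₁.re) = ‖t₁‖ * (1 + t₂.re) := by
    have h6' : ‖(1 + t₁)‖ * (‖t₂‖ * (1 + t₁.re))
        = ‖(1 + t₁)‖ * (‖t₁‖ * (1 + t₂.re)) := by
      linear_combination ‖t₁‖ * e2re + (1 + t₁.re) * h4
    exact mul_left_cancel₀ q1.ne' h6'
  have h5 : ‖t₂‖ = ‖t₁‖ := by nlinarith [e1re, h6]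
  have hre : t₂.re = t₁.re ∧ t₂.im = t₁.im := by
    constructor
    · rw [h5] at e1re; exact (mul_left_cancel₀ p1.ne' e1re).symm
    · rw [h5] at e1im; exact (mul_left_cancel₀ p1.ne' e1im).symm
  exact Complex.ext hre.1.symm hre.2.symm

/-- The argument map restricted to the line {(t,1+t)} is injective on the
upper half-plane, and likewise on the lower half-plane. -/
theorem arg_map_injective_on_half_planes :
    (∀ t₁ t₂ : ℂ, 0 < t₁.im → 0 < t₂.im →
      Complex.arg t₁ = Complex.arg t₂ →
      Complex.arg (1 + t₁) = Complex.arg (1 + t₂) → t₁ = t₂) ∧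
    (∀ t₁ t₂ : ℂ, t₁.im < 0 → t₂.im < 0 →
      Complex.arg t₁ = Complex.arg t₂ →
      Complex.arg (1 + t₁) = Complex.arg (1 + t₂) → t₁ = t₂) := by
  constructor
  · intro t₁ t₂ h1 h2 ha hb; exact arg_key t₁ t₂ (ne_of_gt h1) (ne_of_gt h2) ha hb
  · intro t₁ t₂ h1 h2 ha hb; exact arg_key t₁ t₂ (ne_of_lt h1) (ne_of_lt h2) ha hb
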